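/- For each fixed t > 0, the map x ↦ φ_t(x) on [0,∞) is concave; indeed its second derivative satisfies (ϖ²/ϖ₋)·e^{−λt} ≤ (1/2)·∂²φ_t(x)/∂x² < 0 for all x ≥ 0, where ϖ = 1 − ϖ₊/ϖ₋. -/

import Mathlib

open Filter Topology

lemma mob_d1 (α β k d x : ℝ) (hx : k * x + d ≠ 0) :
    HasDerivAt (fun y => α - β / (k * y + d)) (β * k / (k * x + d) ^ 2) x := by
  have h1 : HasDerivAt (fun y : ℝ => k * y + d) k x := by
    simpa using ((hasDerivAt_id x).const_mul k).add_const d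
  have h2 := (hasDerivAt_const x β).div h1 hx
  have h3 := h2.const_sub α
  exact h3.congr_deriv (by field_simp; ring)

lemma mob_d2 (β k d x : ℝ) (hx : k * x + d ≠ 0) :
    HasDerivAt (fun y => β * k / (k * y + d) ^ 2) (-2 * β * k ^ 2 / (k * x + d) ^ 3) x := by
  have h1 : HasDerivAt (fun y : ℝ => k * y + d) k x := by
    simpa using ((hasDerivAt_id x).const_mul k).add_const d
  have h2 := (hasDerivAt_const x (β * k)).div (h1.pow 2) (pow_ne_zero 2 hx)
  exact h2.congr_deriv (by simp only [Pi.pow_apply]; field_simp; ring)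

lemma mob_ev (k d x : ℝ) (hx : k * x + d ≠ 0) : ∀ᶠ y in 𝓝 x, k * y + d ≠ 0 := by
  have : ContinuousAt (fun y : ℝ => k * y + d) x := by fun_prop
  exact this.eventually_ne hx

lemma mob_main (α β k d : ℝ) (f : ℝ → ℝ)
    (hf : ∀ y, k * y + d ≠ 0 → f y = α - β / (k * y + d)) (x : ℝ) (hx : k * x + d ≠ 0) :
    iteratedDeriv 2 f x = -2 * β * k ^ 2 / (k * x + d) ^ 3 ∧
      DifferentiableAt ℝ f x ∧ DifferentiableAt ℝ (deriv f) x := by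
  have hev : f =ᶠ[𝓝 x] fun y => α - β / (k * y + d) :=
    (mob_ev k d x hx).mono fun y hy => hf y hy
  have hderiv : ∀ z : ℝ, k * z + d ≠ 0 → deriv f z = β * k / (k * z + d) ^ 2 := by
    intro z hz
    have hevz : f =ᶠ[𝓝 z] fun y => α - β / (k * y + d) :=
      (mob_ev k d z hz).mono fun y hy => hf y hy
    rw [hevz.deriv_eq, (mob_d1 α β k d z hz).deriv]
  have hev' : deriv f =ᶠ[𝓝 x] fun y => β * k / (k * y + d) ^ 2 :=
    (mob_ev k d x hx).mono fun y hy => hderiv y hy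
  refine ⟨?_, ?_, ?_⟩
  · rw [iteratedDeriv_succ, iteratedDeriv_one, hev'.deriv_eq, (mob_d2 β k d x hx).deriv]
  · exact (mob_d1 α β k d x hx).differentiableAt.congr_of_eventuallyEq hev
  · exact (mob_d2 β k d x hx).differentiableAt.congr_of_eventuallyEq hev'

lemma phi_eq_aux (p m E y : ℝ) (hE1 : E ≠ 1)
    (hy : (1 - E) * y + (p * E - m) ≠ 0) :
    p + (y - p) * ((p - m) * E) / ((p - m) * E + (y - m) * (1 - E)) =
      (p + (p - m) * E / (1 - E)) -
        ((p - m) ^ 2 * E / (1 - E)) / ((1 - E) * y + (p * E - m)) := by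
  have h2 : (p - m) * E + (y - m) * (1 - E) = (1 - E) * y + (p * E - m) := by ring
  rw [h2]
  have hk : (1 : ℝ) - E ≠ 0 := sub_ne_zero.mpr (Ne.symm hE1)
  rw [eq_sub_iff_add_eq, add_assoc, add_right_inj, div_div, div_add_div _ _ hy (mul_ne_zero hk hy), div_eq_div_iff (mul_ne_zero hy (mul_ne_zero hk hy)) hk]
  ring

noncomputable def lam (A R S : ℝ) : ℝ := 2 * Real.sqrt (A ^ 2 + R * S)

noncomputable def wplus (A R S : ℝ) : ℝ := (A + lam A R S / 2) / S

noncomputable def wminus (A R S : ℝ) : ℝ := (A - lam A R S / 2) / S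

/-- The closed-form Riccati semigroup `φ_t(x)`. -/
noncomputable def phi (A R S t x : ℝ) : ℝ :=
  wplus A R S +
    (x - wplus A R S) * ((wplus A R S - wminus A R S) * Real.exp (-(lam A R S) * t)) /
      ((wplus A R S - wminus A R S) * Real.exp (-(lam A R S) * t) +
        (x - wminus A R S) * (1 - Real.exp (-(lam A R S) * t)))

/-- `ϖ = 1 - ϖ₊/ϖ₋`. -/
noncomputable def vpi (A R S : ℝ) : ℝ := 1 - wplus A R S / wminus A R S

theorem riccati_flow_concave (A R S : ℝ) (hR : 0 < R) (hS : 0 < S)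
    (t : ℝ) (ht : 0 < t) :
    (∀ x : ℝ, 0 ≤ x →
        vpi A R S ^ 2 / wminus A R S * Real.exp (-(lam A R S) * t) ≤
            (1 / 2) * iteratedDeriv 2 (fun y => phi A R S t y) x ∧
          (1 / 2) * iteratedDeriv 2 (fun y => phi A R S t y) x < 0) ∧
      ConcaveOn ℝ (Set.Ici (0 : ℝ)) (fun y => phi A R S t y) := by
  -- basic abbreviations
  set p := wplus A R S with hp_def
  set m := wminus A R S with hm_def
  set E := Real.exp (-(lam A R S) * t) with hE_def
  -- basic facts
  have hsq : Real.sqrt (A ^ 2) < Real.sqrt (A ^ 2 + R * S) :=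
    Real.sqrt_lt_sqrt (by positivity) (by nlinarith)
  have habs : |A| < lam A R S / 2 := by
    rw [← Real.sqrt_sq_eq_abs]
    unfold lam; linarith
  have hA1 : A < lam A R S / 2 := (abs_lt.mp habs).2
  have hA2 : -(lam A R S / 2) < A := (abs_lt.mp habs).1
  have hlam : 0 < lam A R S := by
    have := abs_nonneg A; linarith
  have hp : 0 < p := by
    rw [hp_def]; unfold wplus; exact div_pos (by linarith) hS
  have hm : m < 0 := by
    rw [hm_def]; unfold wminus
    exact div_neg_of_neg_of_pos (by linarith) hS
  have hE : 0 < E := Real.exp_pos _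
  have hE1 : E < 1 := by
    rw [hE_def]
    have : -(lam A R S) * t < 0 := by nlinarith
    calc Real.exp (-(lam A R S) * t) < Real.exp 0 := Real.exp_lt_exp.mpr this
      _ = 1 := Real.exp_zero
  set k := 1 - E with hk_def
  set d := p * E - m with hd_def
  have hk : 0 < k := by rw [hk_def]; linarith
  have hd : 0 < d := by rw [hd_def]; nlinarith
  have hpm : 0 < p - m := by linarith
  set α := p + (p - m) * E / k with hα_def
  set β := (p - m) ^ 2 * E / k with hβ_def
  set f : ℝ → ℝ := fun y => phi A R S t y with hf_def
  have hf : ∀ y, k * y + d ≠ 0 → f y = α - β / (k * y + d) := by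
    intro y hy
    show phi A R S t y = _
    rw [phi]
    exact phi_eq_aux p m E y (by linarith) hy
  have hxd : ∀ x : ℝ, 0 ≤ x → 0 < k * x + d := by
    intro x hx; nlinarith
  have key : ∀ x : ℝ, 0 ≤ x →
      iteratedDeriv 2 f x = -2 * β * k ^ 2 / (k * x + d) ^ 3 ∧
        DifferentiableAt ℝ f x ∧ DifferentiableAt ℝ (deriv f) x :=
    fun x hx => mob_main α β k d f hf x (hxd x hx).ne'
  have hm3 : (0 : ℝ) < (-m) ^ 3 := pow_pos (by linarith) 3
  have hbounds : ∀ x : ℝ, 0 ≤ x →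
      vpi A R S ^ 2 / m * E ≤ (1 / 2) * iteratedDeriv 2 f x ∧
        (1 / 2) * iteratedDeriv 2 f x < 0 := by
    intro x hx
    obtain ⟨hit2, -, -⟩ := key x hx
    have hD : 0 < k * x + d := hxd x hx
    have hval : (1 / 2) * iteratedDeriv 2 f x = -((p - m) ^ 2 * E * k / (k * x + d) ^ 3) := by
      rw [hit2, hβ_def]
      field_simp
    have hvpi : vpi A R S ^ 2 / m * E = -((p - m) ^ 2 * E / (-m) ^ 3) := by
      rw [vpi, ← hp_def, ← hm_def]
      field_simp [hm.ne]
      ring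
    constructor
    · rw [hval, hvpi, neg_le_neg_iff]
      rw [div_le_div_iff₀ (by positivity) hm3]
      have hkm : k * (-m) ^ 3 ≤ (k * x + d) ^ 3 := by
        have h2 : (-m) ^ 3 ≤ (k * x + d) ^ 3 := by
          apply pow_le_pow_left₀ (by linarith)
          rw [hd_def]; nlinarith
        have h3 : k * (-m) ^ 3 ≤ 1 * (-m) ^ 3 :=
          mul_le_mul_of_nonneg_right (by linarith) hm3.le
        linarith
      have hc : (0 : ℝ) ≤ (p - m) ^ 2 * E := by positivity
      have h4 := mul_le_mul_of_nonneg_left hkm hc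
      linear_combination h4
    · rw [hval]
      have : 0 < (p - m) ^ 2 * E * k / (k * x + d) ^ 3 := by positivity
      linarith
  refine ⟨hbounds, ?_⟩
  apply concaveOn_of_deriv2_nonpos (convex_Ici 0)
  · intro x hx
    exact ((key x hx).2.1).continuousAt.continuousWithinAt
  · rw [interior_Ici]
    intro x hx
    exact ((key x (le_of_lt hx)).2.1).differentiableWithinAt
  · rw [interior_Ici]
    intro x hx
    exact ((key x (le_of_lt hx)).2.2).differentiableWithinAt
  · rw [interior_Ici]
    intro x hx
    have h := (hbounds x (le_of_lt hx)).2
    have h2 : deriv^[2] f x = iteratedDeriv 2 f x := by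
      rw [iteratedDeriv_eq_iterate]
    rw [h2]
    linarith
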